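/- Let u, v ∈ ℝ^n with v = s·u for some s > 0, ‖u‖₂ = r > 0, w > 0, γ > 0, and a, b, c as in the rank-two perturbation setting (a = γ(w/r³)uᵀv + w/r, b = −(3γw/r⁵ uᵀv + w/r³), c = γw/r³). Then Δ = 4c²r²‖v‖₂² + b²r⁴ + 4bc r² uᵀv equals a², and consequently the smallest extreme eigenvalue λ₃ = ½(2a + br² + 2c uᵀv) − ½√Δ equals 0, so the matrix aI + buuᵀ + c(uvᵀ+vuᵀ) is positive semidefinite. -/

import Mathlib

open Matrix BigOperators

/-- Euclidean norm of a vector in `ℝ^n`. -/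
noncomputable def enorm {n : ℕ} (v : Fin n → ℝ) : ℝ := Real.sqrt (∑ i, v i ^ 2)

/-- Euclidean dot product. -/
def dot {n : ℕ} (u v : Fin n → ℝ) : ℝ := ∑ i, u i * v i

/-- Discriminant of the rank-two perturbation with `‖u‖ = r`. -/
noncomputable def Delta {n : ℕ} (b c r : ℝ) (u v : Fin n → ℝ) : ℝ :=
  4 * c ^ 2 * r ^ 2 * (_root_.enorm v) ^ 2 + b ^ 2 * r ^ 4 + 4 * b * c * r ^ 2 * dot u v

/-- Extreme eigenvalue `λ₃`. -/
noncomputable def lam3 {n : ℕ} (a b c r : ℝ) (u v : Fin n → ℝ) : ℝ :=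
  (2 * a + b * r ^ 2 + 2 * c * dot u v) / 2 - Real.sqrt (Delta b c r u v) / 2

/-- Collinear case `v = s·u`, `s > 0`: the discriminant `Δ` equals `a²`, the smallest extreme
eigenvalue `λ₃` is `0`, and the matrix `aI + buuᵀ + c(uvᵀ + vuᵀ)` is positive semidefinite. -/
theorem stmt9 {n : ℕ} (r w γ s : ℝ) (hr : 0 < r) (hw : 0 < w) (hγ : 0 < γ) (hs : 0 < s)
    (u v : Fin n → ℝ) (hu : _root_.enorm u = r) (hv : v = s • u)
    (a b c : ℝ)
    (hA : a = γ * (w / r ^ 3) * dot u v + w / r)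
    (hB : b = -(3 * γ * w / r ^ 5 * dot u v + w / r ^ 3))
    (hC : c = γ * w / r ^ 3) :
    Delta b c r u v = a ^ 2 ∧
    lam3 a b c r u v = 0 ∧
    (a • (1 : Matrix (Fin n) (Fin n) ℝ) + b • Matrix.vecMulVec u u +
      c • (Matrix.vecMulVec u v + Matrix.vecMulVec v u)).PosSemidef := by
  have hr' : r ≠ 0 := ne_of_gt hr
  have hsum_nonneg : (0:ℝ) ≤ ∑ i, u i ^ 2 := Finset.sum_nonneg fun i _ => sq_nonneg _
  have hu2 : (∑ i, u i ^ 2) = r ^ 2 := by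
    have h := Real.sq_sqrt hsum_nonneg
    rw [show Real.sqrt (∑ i, u i ^ 2) = _root_.enorm u from rfl, hu] at h
    linarith
  have hduv : dot u v = s * r ^ 2 := by
    simp only [dot, hv, Pi.smul_apply, smul_eq_mul]
    rw [← hu2, Finset.mul_sum]
    apply Finset.sum_congr rfl
    intro i _; ring
  have hvnorm : (_root_.enorm v) ^ 2 = s ^ 2 * r ^ 2 := by
    have h2 : (∑ i, v i ^ 2) = s ^ 2 * r ^ 2 := by
      simp only [hv, Pi.smul_apply, smul_eq_mul]
      rw [← hu2, Finset.mul_sum]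
      apply Finset.sum_congr rfl
      intro i _; ring
    have hnn : (0:ℝ) ≤ ∑ i, v i ^ 2 := Finset.sum_nonneg fun i _ => sq_nonneg _
    rw [_root_.enorm, Real.sq_sqrt hnn, h2]
  have ha : a = w * (1 + γ * s) / r := by
    rw [hA, hduv]; field_simp; ring
  have hapos : 0 < a := by
    rw [ha]
    positivity
  have hΔ : Delta b c r u v = a ^ 2 := by
    rw [Delta, hvnorm, hB, hC, ha, hduv]
    field_simp
    ring
  refine ⟨hΔ, ?_, ?_⟩
  · rw [lam3, hΔ, Real.sqrt_sq hapos.le, hB, hC, hduv, ha]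
    field_simp
    ring
  · -- the matrix equals a • 1 + (b + 2*c*s) • uuᵀ, with b + 2*c*s = -a/r²
    have hM : a • (1 : Matrix (Fin n) (Fin n) ℝ) + b • Matrix.vecMulVec u u +
        c • (Matrix.vecMulVec u v + Matrix.vecMulVec v u) =
        a • (1 : Matrix (Fin n) (Fin n) ℝ) + (b + 2 * c * s) • Matrix.vecMulVec u u := by
      ext i j
      simp [hv, Matrix.vecMulVec, Matrix.one_apply]
      by_cases h : i = j
      · simp [h]; try ring
      · simp only [if_neg (fun hh : j = i => h hh.symm), if_neg h]; ring
    rw [hM]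
    have hbc : b + 2 * c * s = -a / r ^ 2 := by
      rw [hB, hC, hduv, ha]
      field_simp
      ring
    rw [Matrix.posSemidef_iff_dotProduct_mulVec]
    constructor
    · unfold Matrix.IsHermitian
      ext i j
      simp [Matrix.conjTranspose_apply, Matrix.one_apply, Matrix.vecMulVec]
      by_cases h : i = j
      · simp [h]; try ring
      · simp only [if_neg (fun hh : j = i => h hh.symm), if_neg h]; ring
    · intro x
      have h1 : x ⬝ᵥ ((1 : Matrix (Fin n) (Fin n) ℝ) *ᵥ x) = ∑ i, x i ^ 2 := by
        simp [Matrix.one_mulVec, dotProduct, sq]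
      have h2 : x ⬝ᵥ (Matrix.vecMulVec u u *ᵥ x) = (∑ i, u i * x i) ^ 2 := by
        simp only [Matrix.mulVec, dotProduct, Matrix.vecMulVec, Matrix.of_apply]
        rw [sq, Finset.sum_mul_sum]
        apply Finset.sum_congr rfl
        intro i _
        rw [Finset.mul_sum]
        apply Finset.sum_congr rfl
        intro j _
        ring
      have hquad : (x ⬝ᵥ (a • (1 : Matrix (Fin n) (Fin n) ℝ) +
          (b + 2 * c * s) • Matrix.vecMulVec u u) *ᵥ x) =
          a * (∑ i, x i ^ 2) + (b + 2 * c * s) * (∑ i, u i * x i) ^ 2 := by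
        rw [Matrix.add_mulVec, Matrix.smul_mulVec, Matrix.smul_mulVec,
          dotProduct_add, dotProduct_smul, dotProduct_smul, smul_eq_mul, smul_eq_mul, h1, h2]
      have hCS : (∑ i, u i * x i) ^ 2 ≤ (∑ i, u i ^ 2) * (∑ i, x i ^ 2) :=
        Finset.sum_mul_sq_le_sq_mul_sq Finset.univ u x
      show (0:ℝ) ≤ star x ⬝ᵥ _
      rw [show star x = x from rfl, hquad, hbc]
      rw [hu2] at hCS
      have hx : (0:ℝ) ≤ ∑ i, x i ^ 2 := Finset.sum_nonneg fun i _ => sq_nonneg _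
      have h3 : (∑ i, u i * x i) ^ 2 / r ^ 2 ≤ ∑ i, x i ^ 2 := by
        rw [div_le_iff₀ (by positivity)]
        linarith [hCS]
      have h4 : a * ((∑ i, u i * x i) ^ 2 / r ^ 2) ≤ a * (∑ i, x i ^ 2) :=
        mul_le_mul_of_nonneg_left h3 hapos.le
      have h5 : (-a / r ^ 2) * (∑ i, u i * x i) ^ 2 =
          -(a * ((∑ i, u i * x i) ^ 2 / r ^ 2)) := by ring
      rw [h5]
      linarith
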